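/- arXiv:1009.1427 — 3 statements merged into one kernel-verified Lean document; each statement's English description precedes it below -/
import Mathlib

section
/- Let A be an artin algebra, let 0 → X → Y → Z → 0 be a short exact sequence of finitely generated A-modules, and let M be a finitely generated A-module. If Hom̲_A(M,X) = 0 and Hom̲_A(M,Z) = 0, then Hom̲_A(M,Y) = 0. -/
open CategoryTheory Limits

universe u

namespace SMS

variable {A : Type u} [Ring A]

/-- A morphism of `A`-modules factors through a projective module. -/
def FTP {X Y : ModuleCat.{u} A} (f : X ⟶ Y) : Prop :=
  ∃ (P : ModuleCat.{u} A) (g : X ⟶ P) (h : P ⟶ Y), Projective P ∧ f = g ≫ h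

/-- The stable Hom-group `Hom̲_A(X,Y)` vanishes. -/
def StablyZero (X Y : ModuleCat.{u} A) : Prop := ∀ f : X ⟶ Y, FTP f

/-- The stable endomorphism ring `Hom̲_A(X,X)` is a division ring: it is nonzero and every
nonzero element (i.e. every endomorphism not factoring through a projective) is invertible
modulo maps factoring through projectives. -/
def StableEndoDivisionRing (X : ModuleCat.{u} A) : Prop :=
  ¬ FTP (𝟙 X) ∧
    ∀ f : X ⟶ X, ¬ FTP f →
      ∃ g : X ⟶ X, FTP (f ≫ g - 𝟙 X) ∧ FTP (g ≫ f - 𝟙 X)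

/-- `X` is a direct summand of `Y`. -/
def IsSummand (X Y : ModuleCat.{u} A) : Prop := ∃ (i : X ⟶ Y) (r : Y ⟶ X), i ≫ r = 𝟙 X

/-- An indecomposable module: nonzero, and in any direct sum decomposition one factor vanishes. -/
def Indec (X : ModuleCat.{u} A) : Prop :=
  ¬ IsZero X ∧ ∀ Y Z : ModuleCat.{u} A, Nonempty (X ≅ Y ⊞ Z) → IsZero Y ∨ IsZero Z

/-- `X` is an object of `mod_P A`: finitely generated and without nonzero projective
direct summands. -/
def InModP (X : ModuleCat.{u} A) : Prop :=
  Module.Finite A X ∧ ∀ P : ModuleCat.{u} A, Projective P → IsSummand P X → IsZero P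

/-- `0 → X --f--> E --g--> Z → 0` is an almost split (Auslander-Reiten) sequence. -/
structure IsARSeq {X E Z : ModuleCat.{u} A} (f : X ⟶ E) (g : E ⟶ Z) : Prop where
  mono : Function.Injective f
  epi : Function.Surjective g
  exact : Function.Exact f g
  not_split : ∀ r : E ⟶ X, f ≫ r ≠ 𝟙 X
  left_almost : ∀ (U : ModuleCat.{u} A) (u : X ⟶ U),
    (∀ r : U ⟶ X, u ≫ r ≠ 𝟙 X) → ∃ v : E ⟶ U, f ≫ v = u
  right_almost : ∀ (U : ModuleCat.{u} A) (u : U ⟶ Z),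
    (∀ s : Z ⟶ U, s ≫ u ≠ 𝟙 Z) → ∃ v : U ⟶ E, v ≫ g = u

/-- A node: a simple module, neither projective nor injective, such that the middle term of
the almost split sequence starting at it is projective. -/
def IsNode (X : ModuleCat.{u} A) : Prop :=
  IsSimpleModule A X ∧ ¬ Projective X ∧ ¬ Injective X ∧
    ∃ (E Z : ModuleCat.{u} A) (f : X ⟶ E) (g : E ⟶ Z), Projective E ∧ IsARSeq f g

variable (A) in
/-- The indecomposable objects of the subcategory `e(A)`: simple projective modules, nodes,
and indecomposable non-simple non-injective projective modules. -/
def EClass : Set (ModuleCat.{u} A) :=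
  {X | (IsSimpleModule A X ∧ Projective X) ∨ IsNode X ∨
    (Module.Finite A X ∧ Indec X ∧ ¬ IsSimpleModule A X ∧ ¬ Injective X ∧ Projective X)}

variable (A) in
/-- The indecomposable objects of the subcategory `e'(A)`: simple projective modules and nodes. -/
def E'Class : Set (ModuleCat.{u} A) :=
  {X | (IsSimpleModule A X ∧ Projective X) ∨ IsNode X}

/-- `X` is (isomorphic to) a finite direct sum of objects of `𝒞`. -/
inductive IsFinSum (𝒞 : Set (ModuleCat.{u} A)) : ModuleCat.{u} A → Prop
  | zero {X} : IsZero X → IsFinSum 𝒞 X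
  | mem {X} : X ∈ 𝒞 → IsFinSum 𝒞 X
  | biprod {X Y Z} : IsFinSum 𝒞 X → IsFinSum 𝒞 Y → Nonempty (Z ≅ X ⊞ Y) → IsFinSum 𝒞 Z

/-- `⟨𝒞⟩`: direct summands of finite direct sums of objects of `𝒞`. -/
def AddClos (𝒞 : Set (ModuleCat.{u} A)) : Set (ModuleCat.{u} A) :=
  {X | ∃ Y, IsFinSum 𝒞 Y ∧ IsSummand X Y}

variable (A) in
/-- `⟨𝒞⟩ * ⟨𝒟⟩`: indecomposable modules `Y` admitting a short exact sequence
`0 → X → Y ⊕ P → Z → 0` with `Z ∈ ⟨𝒟⟩`, `X ∈ ⟨𝒞 ∪ e(A)⟩` and `P` projective. -/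
def Star (𝒞 𝒟 : Set (ModuleCat.{u} A)) : Set (ModuleCat.{u} A) :=
  {Y | Indec Y ∧ ∃ (X Z P : ModuleCat.{u} A) (f : X ⟶ Y ⊞ P) (g : (Y ⊞ P : ModuleCat.{u} A) ⟶ Z),
    X ∈ AddClos (𝒞 ∪ EClass A) ∧ Z ∈ AddClos 𝒟 ∧ Projective P ∧
    Function.Injective f ∧ Function.Surjective g ∧ Function.Exact f g}

variable (A) in
/-- The classes `⟨𝒮⟩ₙ` (here `Gen A 𝒮 n = ⟨𝒮⟩_{n+1}`):
`⟨𝒮⟩₁ = ⟨𝒮⟩` and `⟨𝒮⟩ₙ = ⟨⟨𝒮⟩ₙ₋₁ * ⟨𝒮⟩⟩`. -/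
def Gen (𝒮 : Set (ModuleCat.{u} A)) : ℕ → Set (ModuleCat.{u} A)
  | 0 => AddClos 𝒮
  | (n + 1) => AddClos (Star A (Gen 𝒮 n) 𝒮)

variable (A) in
/-- A simple-minded system over `A`. -/
structure IsSMS (𝒮 : Set (ModuleCat.{u} A)) : Prop where
  modP : ∀ X ∈ 𝒮, InModP X
  orth_of_ne : ∀ X ∈ 𝒮, ∀ Y ∈ 𝒮, X ≠ Y → StablyZero X Y
  endo_div : ∀ X ∈ 𝒮, StableEndoDivisionRing X
  gen : ∀ X : ModuleCat.{u} A, Module.Finite A X → Indec X → ¬ Projective X →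
    ∃ n, X ∈ Gen A 𝒮 n

end SMS

open SMS in
/-- Let `A` be an artin algebra, `0 → X → Y → Z → 0` a short exact sequence of
finitely generated `A`-modules and `M` a finitely generated `A`-module. If `Hom̲_A(M,X) = 0` and
`Hom̲_A(M,Z) = 0`, then `Hom̲_A(M,Y) = 0`. -/
theorem stmt2 (R : Type u) [CommRing R] [IsArtinianRing R]
    (A : Type u) [Ring A] [Algebra R A] [Module.Finite R A]
    (X Y Z M : ModuleCat.{u} A)
    (hX : Module.Finite A X) (hY : Module.Finite A Y) (hZ : Module.Finite A Z)
    (hM : Module.Finite A M)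
    (f : X ⟶ Y) (g : Y ⟶ Z)
    (hf : Function.Injective f) (hg : Function.Surjective g) (hfg : Function.Exact f g)
    (h₁ : StablyZero M X) (h₂ : StablyZero M Z) :
    StablyZero M Y := by
  intro u
  obtain ⟨P, a, b, hP, hub⟩ := h₂ (u ≫ g)
  haveI := hP
  haveI : Epi g := (ModuleCat.epi_iff_surjective g).2 hg
  let b' : P ⟶ Y := Projective.factorThru b g
  have hb' : b' ≫ g = b := Projective.factorThru_comp b g
  set w : M ⟶ Y := u - a ≫ b' with hwdef
  have hw : ∀ m, g (w m) = 0 := by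
    intro m
    have h1 : g (u m) = b (a m) := by
      have := congrArg (fun t : M ⟶ Z => t m) hub
      simpa using this
    have h2 : g (b' (a m)) = b (a m) := by
      have := congrArg (fun t : P ⟶ Z => t (a m)) hb'
      simpa using this
    have hm : (u - a ≫ b') m = u m - b' (a m) := rfl
    rw [hwdef, hm, map_sub, h1, h2, sub_self]
  have hrange : ∀ m, w m ∈ LinearMap.range f.hom := by
    intro m
    have := (hfg (w m)).1 (hw m)
    simpa [LinearMap.coe_range] using this
  let e : X ≃ₗ[A] LinearMap.range f.hom := LinearEquiv.ofInjective f.hom hf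
  let c : M ⟶ X :=
    ModuleCat.ofHom (e.symm.toLinearMap.comp (LinearMap.codRestrict (LinearMap.range f.hom) w.hom hrange))
  have hc : c ≫ f = w := by
    ext m
    show f (e.symm ⟨w m, hrange m⟩) = w m
    calc f (e.symm ⟨w m, hrange m⟩)
        = ((e (e.symm ⟨w m, hrange m⟩)) : Y) := (LinearEquiv.ofInjective_apply _ _).symm
      _ = w m := by rw [e.apply_symm_apply]
  obtain ⟨Q, a', b'', hQ, hcq⟩ := h₁ c
  haveI := hQ
  refine ⟨Q ⊞ P, biprod.lift a' a, biprod.desc (b'' ≫ f) b', inferInstance, ?_⟩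
  rw [biprod.lift_desc, ← Category.assoc, ← hcq, hc, hwdef]
  abel
end

section
/- Let A be a (non-semisimple) artin algebra and let S be a simple-minded system over A. Then S contains, up to isomorphism, every simple A-module that is non-projective and injective. -/
open CategoryTheory Limits

universe u

namespace SMS

variable {A : Type u} [Ring A]

section Aux

lemma ftp_precomp {X Y Z : ModuleCat.{u} A} (f : X ⟶ Y) {g : Y ⟶ Z} (hg : FTP g) :
    FTP (f ≫ g) := by
  obtain ⟨P, a, b, hP, h⟩ := hg
  exact ⟨P, f ≫ a, b, hP, by rw [h, Category.assoc]⟩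

lemma ftp_postcomp {X Y Z : ModuleCat.{u} A} {f : X ⟶ Y} (hf : FTP f) (g : Y ⟶ Z) :
    FTP (f ≫ g) := by
  obtain ⟨P, a, b, hP, h⟩ := hf
  exact ⟨P, a, b ≫ g, hP, by rw [h, Category.assoc]⟩

lemma ftp_neg {X Y : ModuleCat.{u} A} {f : X ⟶ Y} (hf : FTP f) : FTP (-f) := by
  obtain ⟨P, a, b, hP, h⟩ := hf
  exact ⟨P, a, -b, hP, by rw [h, Preadditive.comp_neg]⟩

lemma projective_of_summand {X C : ModuleCat.{u} A} (h : IsSummand X C) (hC : Projective C) :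
    Projective X := by
  obtain ⟨i, r, hir⟩ := h
  constructor
  intro E Z f e he
  obtain ⟨f', hf'⟩ := hC.factors (r ≫ f) e
  exact ⟨i ≫ f', by rw [Category.assoc, hf', ← Category.assoc, hir, Category.id_comp]⟩

lemma summand_trans {X Y Z : ModuleCat.{u} A} (h1 : IsSummand X Y) (h2 : IsSummand Y Z) :
    IsSummand X Z := by
  obtain ⟨i, r, hir⟩ := h1
  obtain ⟨j, s, hjs⟩ := h2
  refine ⟨i ≫ j, s ≫ r, ?_⟩
  rw [Category.assoc, ← Category.assoc j, hjs, Category.id_comp, hir]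

lemma nontrivial_of_simple {X : ModuleCat.{u} A} (hX : IsSimpleModule A X) : Nontrivial X :=
  @IsSimpleModule.nontrivial A _ X _ _ hX

lemma id_ne_zero_of_simple {X : ModuleCat.{u} A} (hX : IsSimpleModule A X) :
    (𝟙 X : X ⟶ X) ≠ 0 := by
  intro h
  obtain ⟨x, y, hxy⟩ := nontrivial_of_simple hX
  apply hxy
  have hx := ConcreteCategory.congr_hom h x
  have hy := ConcreteCategory.congr_hom h y
  simp only [ModuleCat.id_apply] at hx hy
  rw [hx, hy]; rfl

lemma summand_iso {X Y Z : ModuleCat.{u} A} (h : IsSummand X Y) (e : Y ≅ Z) :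
    IsSummand X Z := by
  obtain ⟨i, r, hir⟩ := h
  exact ⟨i ≫ e.hom, e.inv ≫ r, by
    rw [Category.assoc, ← Category.assoc e.hom, e.hom_inv_id, Category.id_comp, hir]⟩

lemma summand_biprod_cases {X Y₁ Y₂ : ModuleCat.{u} A} (hX : IsSimpleModule A X)
    (hs : IsSummand X (Y₁ ⊞ Y₂)) : IsSummand X Y₁ ∨ IsSummand X Y₂ := by
  haveI : IsSimpleModule A X := hX
  obtain ⟨i, r, hir⟩ := hs
  have hab : (i ≫ biprod.fst) ≫ (biprod.inl ≫ r) + (i ≫ biprod.snd) ≫ (biprod.inr ≫ r)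
      = 𝟙 X := by
    simp only [Category.assoc, ← Preadditive.comp_add]
    rw [show biprod.fst ≫ biprod.inl ≫ r + biprod.snd ≫ biprod.inr ≫ r
        = (biprod.fst ≫ biprod.inl + biprod.snd ≫ biprod.inr) ≫ r by
      rw [Preadditive.add_comp, Category.assoc, Category.assoc]]
    rw [biprod.total, Category.id_comp, hir]
  by_cases hz : (i ≫ biprod.fst) ≫ (biprod.inl ≫ r) = 0
  · right
    refine ⟨i ≫ biprod.snd, biprod.inr ≫ r, ?_⟩
    rw [← hab, hz, zero_add]
  · left
    have hbij : Function.Bijective ((i ≫ biprod.fst) ≫ (biprod.inl ≫ r) : X ⟶ X) :=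
      LinearMap.bijective_or_eq_zero _ |>.resolve_right fun h => hz (ModuleCat.hom_ext h)
    set a : X ⟶ X := (i ≫ biprod.fst) ≫ (biprod.inl ≫ r) with ha
    let ae : X ≃ₗ[A] X := LinearEquiv.ofBijective a.hom hbij
    refine ⟨i ≫ biprod.fst, (biprod.inl ≫ r) ≫ ModuleCat.ofHom ae.symm.toLinearMap, ?_⟩
    refine ModuleCat.hom_ext (LinearMap.ext fun x => ?_)
    show ae.symm (a x) = x
    exact ae.symm_apply_apply x

lemma summand_of_finsum {𝒞 : Set (ModuleCat.{u} A)} {X : ModuleCat.{u} A}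
    (hX : IsSimpleModule A X) :
    ∀ {Y : ModuleCat.{u} A}, IsFinSum 𝒞 Y → IsSummand X Y → ∃ C ∈ 𝒞, IsSummand X C := by
  intro Y h
  induction h with
  | zero hz =>
    rintro ⟨i, r, hir⟩
    exact absurd (by rw [← hir, hz.eq_of_tgt i 0, zero_comp]) (id_ne_zero_of_simple hX)
  | mem hm => exact fun hs => ⟨_, hm, hs⟩
  | biprod h1 h2 hiso ih1 ih2 =>
    intro hs
    obtain ⟨e⟩ := hiso
    rcases summand_biprod_cases hX (summand_iso hs e) with h | h
    · exact ih1 h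
    · exact ih2 h

lemma iso_of_summand_good {X S : ModuleCat.{u} A}
    (hmod : InModP S) (hdiv : StableEndoDivisionRing S)
    (hnp : ¬ Projective X) (hX : IsSimpleModule A X) (hs : IsSummand X S) :
    Nonempty (X ≅ S) := by
  obtain ⟨i, r, hir⟩ := hs
  have hri : ∀ x : X, r (i x) = x := fun x => ConcreteCategory.congr_hom hir x
  set e : S ⟶ S := r ≫ i with he
  have heapp : ∀ s : S, e s = i (r s) := fun _ => rfl
  have hee : e ≫ e = e := by
    rw [he, Category.assoc, ← Category.assoc i, hir, Category.id_comp]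
  have heapply : ∀ s : S, e (e s) = e s := fun s => ConcreteCategory.congr_hom hee s
  by_cases hFTP : FTP e
  · exfalso
    apply hnp
    have key : i ≫ e ≫ r = 𝟙 X := by
      refine ModuleCat.hom_ext (LinearMap.ext fun x => ?_)
      show r (e (i x)) = x
      rw [heapp, hri, hri]
    have h1 : FTP (𝟙 X) := key ▸ ftp_precomp i (ftp_postcomp hFTP r)
    obtain ⟨P, a, b, hP, hfac⟩ := h1
    exact projective_of_summand ⟨a, b, hfac.symm⟩ hP
  · obtain ⟨g, hg1, hg2⟩ := hdiv.2 e hFTP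
    have key : (𝟙 S - e) ≫ (e ≫ g - 𝟙 S) = e - 𝟙 S := by
      rw [Preadditive.sub_comp, Preadditive.comp_sub, Preadditive.comp_sub,
        Category.id_comp, Category.comp_id, Category.comp_id, ← Category.assoc, hee]
      abel
    have hsub : FTP (𝟙 S - e) := by
      have h2 := ftp_precomp (𝟙 S - e) hg1
      rw [key] at h2
      have h3 := ftp_neg h2
      rwa [neg_sub] at h3
    obtain ⟨P, aP, bP, hPproj, hPeq⟩ := hsub
    set K : ModuleCat.{u} A := ModuleCat.of A ↥(LinearMap.ker e.hom) with hKdef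
    let ι : K ⟶ S := ModuleCat.ofHom (LinearMap.ker e.hom).subtype
    have hmemker : ∀ s : S, s - e s ∈ LinearMap.ker e.hom := by
      intro s
      rw [LinearMap.mem_ker, map_sub, heapply, sub_self]
    let ρ : S ⟶ K := ModuleCat.ofHom (LinearMap.codRestrict _ (LinearMap.id - e.hom)
      (fun s => hmemker s))
    have hιρ : ι ≫ ρ = 𝟙 K := by
      refine ModuleCat.hom_ext (LinearMap.ext fun x => Subtype.ext ?_)
      obtain ⟨s, hsk⟩ := x
      show s - e s = s
      rw [LinearMap.mem_ker.mp hsk, sub_zero]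
    have hKS : IsSummand K S := ⟨ι, ρ, hιρ⟩
    have hPapp : ∀ s : S, bP (aP s) = s - e s := by
      intro s
      have h := ConcreteCategory.congr_hom hPeq s
      exact h.symm
    have hKP : IsSummand K P := by
      refine ⟨ι ≫ aP, bP ≫ ρ, ?_⟩
      refine ModuleCat.hom_ext (LinearMap.ext fun x => Subtype.ext ?_)
      obtain ⟨s, hsk⟩ := x
      show bP (aP s) - e (bP (aP s)) = s
      simp [hPapp s, map_sub, LinearMap.mem_ker.mp hsk, heapply s]
    have hKzero : IsZero K := hmod.2 K (projective_of_summand hKP hPproj) hKS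
    have hker : LinearMap.ker e.hom = ⊥ := by
      rw [Submodule.eq_bot_iff]
      intro s hsker
      have h0 : (𝟙 K : K ⟶ K) = 0 := hKzero.eq_of_src _ _
      have h1 := ConcreteCategory.congr_hom h0 (⟨s, hsker⟩ : ↥(LinearMap.ker e.hom))
      exact congrArg Subtype.val h1
    have heid : e = 𝟙 S := by
      refine ModuleCat.hom_ext (LinearMap.ext fun s => ?_)
      have h1 : s - e s ∈ LinearMap.ker e.hom := hmemker s
      rw [hker, Submodule.mem_bot] at h1
      exact (sub_eq_zero.mp h1).symm
    exact ⟨Iso.mk i r hir (by rw [← he]; exact heid)⟩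

lemma iso_of_summand_simple {X C : ModuleCat.{u} A} (hX : IsSimpleModule A X)
    (hC : IsSimpleModule A C) (hs : IsSummand X C) : Nonempty (X ≅ C) := by
  haveI : IsSimpleModule A X := hX
  haveI : IsSimpleModule A C := hC
  haveI : Nontrivial (↥X) := nontrivial_of_simple hX
  obtain ⟨i, r, hir⟩ := hs
  have hri : ∀ x : X, r (i x) = x := fun x => ConcreteCategory.congr_hom hir x
  have hne : (r ≫ i : C ⟶ C) ≠ 0 := by
    intro h0
    obtain ⟨x, hx⟩ := exists_ne (0 : X)
    apply hx
    have h1 : i (r (i x)) = 0 := by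
      have := ConcreteCategory.congr_hom h0 (i x)
      exact this
    rw [hri] at h1
    rw [← hri x, h1, map_zero]
  have hbij : Function.Bijective (r ≫ i : C ⟶ C) :=
    LinearMap.bijective_or_eq_zero _ |>.resolve_right fun h => hne (ModuleCat.hom_ext h)
  have hiinj : Function.Injective i := fun x y hxy => by rw [← hri x, ← hri y, hxy]
  have hisurj : Function.Surjective i := by
    intro c
    obtain ⟨c', hc'⟩ := hbij.2 c
    exact ⟨r c', hc'⟩
  exact ⟨(LinearEquiv.ofBijective i.hom ⟨hiinj, hisurj⟩).toModuleIso⟩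

lemma not_summand_eclass {X C : ModuleCat.{u} A} (hX : IsSimpleModule A X)
    (hnp : ¬ Projective X) (hinj : Injective X) (hC : C ∈ EClass A)
    (hs : IsSummand X C) : False := by
  rcases hC with ⟨_, hproj⟩ | ⟨hCsimple, _, hCninj, _⟩ | ⟨_, _, _, _, hproj⟩
  · exact hnp (projective_of_summand hs hproj)
  · obtain ⟨e⟩ := iso_of_summand_simple hX hCsimple hs
    exact hCninj (Injective.of_iso e hinj)
  · exact hnp (projective_of_summand hs hproj)

lemma indec_of_simple {X : ModuleCat.{u} A} (hX : IsSimpleModule A X) : Indec X := by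
  haveI : IsSimpleModule A X := hX
  haveI : Nontrivial (↥X) := nontrivial_of_simple hX
  constructor
  · intro hz
    exact id_ne_zero_of_simple hX (hz.eq_of_src _ _)
  · rintro Y Z ⟨e⟩
    set v : Y ⟶ X := biprod.inl ≫ e.inv with hv
    set w : Z ⟶ X := biprod.inr ≫ e.inv with hw
    have hvsplit : v ≫ (e.hom ≫ biprod.fst) = 𝟙 Y := by
      rw [hv, Category.assoc, ← Category.assoc e.inv, e.inv_hom_id, Category.id_comp,
        biprod.inl_fst]
    have hwsplit : w ≫ (e.hom ≫ biprod.snd) = 𝟙 Z := by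
      rw [hw, Category.assoc, ← Category.assoc e.inv, e.inv_hom_id, Category.id_comp,
        biprod.inr_snd]
    have hzero_of_range : ∀ {W : ModuleCat.{u} A} (f : W ⟶ X) (g : X ⟶ W), f ≫ g = 𝟙 W →
        LinearMap.range f.hom = ⊥ → IsZero W := by
      intro W f g hfg hrange
      have hf0 : f = 0 := ModuleCat.hom_ext (LinearMap.range_eq_bot.mp hrange)
      have hid0 : (𝟙 W : W ⟶ W) = 0 := by rw [← hfg, hf0, zero_comp]
      have hall : ∀ t : W, t = 0 := fun t => by
        have := ConcreteCategory.congr_hom hid0 t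
        simpa using this
      haveI : Subsingleton (↥W) := ⟨fun a b => by rw [hall a, hall b]⟩
      exact ModuleCat.isZero_of_subsingleton W
    rcases eq_bot_or_eq_top (LinearMap.range v.hom) with hV | hV
    · exact Or.inl (hzero_of_range v _ hvsplit hV)
    rcases eq_bot_or_eq_top (LinearMap.range w.hom) with hW | hW
    · exact Or.inr (hzero_of_range w _ hwsplit hW)
    · exfalso
      obtain ⟨x, hx⟩ := exists_ne (0 : X)
      have hxV : x ∈ LinearMap.range v.hom := hV ▸ Submodule.mem_top
      have hxW : x ∈ LinearMap.range w.hom := hW ▸ Submodule.mem_top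
      obtain ⟨y, hy⟩ := hxV
      obtain ⟨z, hz⟩ := hxW
      have hinj_inv : Function.Injective e.inv.hom := by
        intro a b hab
        have h1 : e.hom (e.inv a) = a := ConcreteCategory.congr_hom e.inv_hom_id a
        have h2 : e.hom (e.inv b) = b := ConcreteCategory.congr_hom e.inv_hom_id b
        rw [← h1, ← h2, hab]
      have hinveq : (biprod.inl : Y ⟶ Y ⊞ Z) y = (biprod.inr : Z ⟶ Y ⊞ Z) z :=
        hinj_inv (hy.trans hz.symm)
      have hy0 : y = 0 := by
        have h1 : (biprod.fst : (Y ⊞ Z : ModuleCat.{u} A) ⟶ Y) ((biprod.inl : Y ⟶ Y ⊞ Z) y) = y :=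
          ConcreteCategory.congr_hom (biprod.inl_fst (X := Y) (Y := Z)) y
        have h3 : (biprod.fst : (Y ⊞ Z : ModuleCat.{u} A) ⟶ Y) ((biprod.inr : Z ⟶ Y ⊞ Z) z) = 0 :=
          ConcreteCategory.congr_hom (biprod.inr_fst (X := Y) (Y := Z)) z
        rw [← h1, hinveq, h3]
      apply hx
      rw [← hy, hy0, map_zero]

lemma main_ind {𝒮 : Set (ModuleCat.{u} A)} (h𝒮 : IsSMS A 𝒮) {X : ModuleCat.{u} A}
    (hsimple : IsSimpleModule A X) (hnp : ¬ Projective X) (hinj : Injective X) :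
    ∀ n (W : ModuleCat.{u} A), W ∈ Gen A 𝒮 n → IsSummand X W →
      ∃ Y ∈ 𝒮, Nonempty (X ≅ Y) := by
  intro n
  induction n with
  | zero =>
    intro W hW hs
    obtain ⟨YF, hfin, hsum⟩ := hW
    obtain ⟨S, hS, hXS⟩ := summand_of_finsum hsimple hfin (summand_trans hs hsum)
    exact ⟨S, hS, iso_of_summand_good (h𝒮.modP S hS) (h𝒮.endo_div S hS) hnp hsimple hXS⟩
  | succ n ih =>
    intro W hW hs
    obtain ⟨YF, hfin, hsum⟩ := hW
    obtain ⟨Ys, hYs, hXYs⟩ := summand_of_finsum hsimple hfin (summand_trans hs hsum)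
    obtain ⟨-, Xm, Z, P, f, g, hXm, hZ, hPproj, hfinj, hgsurj, hexact⟩ := hYs
    obtain ⟨i, r, hir⟩ := hXYs
    set j : X ⟶ Ys ⊞ P := i ≫ biprod.inl with hj
    set q : (Ys ⊞ P : ModuleCat.{u} A) ⟶ X := biprod.fst ≫ r with hq
    have hjq : j ≫ q = 𝟙 X := by
      rw [hj, hq, Category.assoc, ← Category.assoc biprod.inl, biprod.inl_fst,
        Category.id_comp, hir]
    by_cases hu : j ≫ g = 0
    · have hmem : ∀ x : X, j x ∈ LinearMap.range f.hom := by
        intro x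
        have hgjx : g (j x) = 0 := by
          have := ConcreteCategory.congr_hom hu x
          exact this
        exact LinearMap.mem_range.mpr ((hexact (j x)).mp hgjx)
      let E := LinearEquiv.ofInjective f.hom hfinj
      let j' : ↥X →ₗ[A] ↥(LinearMap.range f.hom) :=
        LinearMap.codRestrict _ j.hom hmem
      let t : X ⟶ Xm := ModuleCat.ofHom (E.symm.toLinearMap.comp j')
      have hXXm : IsSummand X Xm := by
        refine ⟨t, f ≫ q, ?_⟩
        refine ModuleCat.hom_ext (LinearMap.ext fun x => ?_)
        have hft : f (t x) = j x := by
          show f (E.symm (j' x)) = j x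
          have h1 : (E (E.symm (j' x)) : ↥(Ys ⊞ P)) = ((j' x : _) : ↥(Ys ⊞ P)) := by
            rw [E.apply_symm_apply]
          rwa [LinearEquiv.ofInjective_apply] at h1
        show q (f (t x)) = x
        rw [hft]
        exact ConcreteCategory.congr_hom hjq x
      obtain ⟨YF2, hfin2, hsum2⟩ := hXm
      obtain ⟨C, hC, hXC⟩ := summand_of_finsum hsimple hfin2 (summand_trans hXXm hsum2)
      rcases hC with hC | hC
      · exact ih C hC hXC
      · exact (not_summand_eclass hsimple hnp hinj hC hXC).elim
    · haveI : IsSimpleModule A X := hsimple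
      have huinj : Function.Injective (j ≫ g : X ⟶ Z) := by
        rcases eq_bot_or_eq_top (LinearMap.ker (j ≫ g).hom) with h | h
        · exact LinearMap.ker_eq_bot.mp h
        · exact absurd (ModuleCat.hom_ext (LinearMap.ker_eq_top.mp h)) hu
      haveI : Mono (j ≫ g) := (ModuleCat.mono_iff_injective _).mpr huinj
      haveI : Injective X := hinj
      have hsplit : (j ≫ g) ≫ Injective.factorThru (𝟙 X) (j ≫ g) = 𝟙 X :=
        Injective.comp_factorThru _ _
      obtain ⟨YF2, hfin2, hsum2⟩ := hZ
      obtain ⟨S, hS, hXS⟩ := summand_of_finsum hsimple hfin2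
        (summand_trans ⟨j ≫ g, _, hsplit⟩ hsum2)
      exact ⟨S, hS, iso_of_summand_good (h𝒮.modP S hS) (h𝒮.endo_div S hS) hnp hsimple hXS⟩

end Aux

end SMS

open SMS in
/-- Let `A` be a (non-semisimple) artin algebra and let `𝒮` be a simple-minded
system over `A`. Then `𝒮` contains, up to isomorphism, every simple `A`-module that is
non-projective and injective. -/
theorem stmt3 (R : Type u) [CommRing R] [IsArtinianRing R]
    (A : Type u) [Ring A] [Algebra R A] [Module.Finite R A]
    (hA : ¬ IsSemisimpleRing A)
    (𝒮 : Set (ModuleCat.{u} A)) (h𝒮 : IsSMS A 𝒮)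
    (X : ModuleCat.{u} A) (hfin : Module.Finite A X) (hsimple : IsSimpleModule A X)
    (hnp : ¬ Projective X) (hinj : Injective X) :
    ∃ Y ∈ 𝒮, Nonempty (X ≅ Y) := by
  obtain ⟨n, hn⟩ := h𝒮.gen X hfin (indec_of_simple hsimple) hnp
  exact main_ind h𝒮 hsimple hnp hinj n X hn ⟨𝟙 X, 𝟙 X, Category.id_comp _⟩
end

section
/- Let A be a self-injective artin algebra, M an indecomposable non-projective A-module, and X an indecomposable A-module. If there is a nonzero morphism f̲: X → M in the stable category mod̲ A, then there is a morphism h̲: τ⁻¹Ω(M) → X in mod̲ A such that the composition f̲ ∘ h̲ is nonzero in mod̲ A. -/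
open CategoryTheory Limits

universe u

private lemma descend {A : Type u} [Ring A] {Z W T : Type u}
    [AddCommGroup Z] [Module A Z] [AddCommGroup W] [Module A W]
    [AddCommGroup T] [Module A T]
    (v : Z →ₗ[A] T) (hv : Function.Surjective v) (ψ : Z →ₗ[A] W)
    (hker : ∀ z, v z = 0 → ψ z = 0) :
    ∃ h : T →ₗ[A] W, ∀ z, h (v z) = ψ z := by
  let e := v.quotKerEquivOfSurjective hv
  refine ⟨((LinearMap.ker v).liftQ ψ
      (fun z hz => LinearMap.mem_ker.mpr (hker z (LinearMap.mem_ker.mp hz)))).comp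
      e.symm.toLinearMap, fun z => ?_⟩
  have h1 : e.symm (v z) = Submodule.Quotient.mk z := by
    apply e.injective
    rw [e.apply_symm_apply]
    rfl
  simp [h1]


open SMS in
/-- (Pogorzaly) Let `A` be a self-injective artin algebra, `M` an
indecomposable non-projective `A`-module, `X` an indecomposable `A`-module, and `f : X ⟶ M`
a morphism which is nonzero in the stable category. Let `0 → K → P → M → 0` present the
syzygy `K = Ω(M)` (with `P → M` a projective cover) and let `0 → K → Z → T → 0` be the
almost split sequence starting at `K` (so `T = τ⁻¹Ω(M)`). Then there is `h : T ⟶ X` with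
`f̲ ∘ h̲ ≠ 0` in the stable category. -/
theorem stmt16 (R : Type u) [CommRing R] [IsArtinianRing R]
    (A : Type u) [Ring A] [Algebra R A] [Module.Finite R A]
    (hselfinj : Module.Injective A A)
    (M X : ModuleCat.{u} A) (hM : Module.Finite A M) (hX : Module.Finite A X)
    (hMind : Indec M) (hMnp : ¬ Projective M) (hXind : Indec X)
    (f : X ⟶ M) (hf : ¬ FTP f)
    (K P : ModuleCat.{u} A) (p : P ⟶ M) (hP : Projective P) (hpsurj : Function.Surjective p)
    (hsuperfluous : ∀ N : Submodule A P, N ⊔ LinearMap.ker p.hom = ⊤ → N = ⊤)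
    (i : K ⟶ P) (hi : Function.Injective i) (hip : Function.Exact i p)
    (Z T : ModuleCat.{u} A) (u : K ⟶ Z) (v : Z ⟶ T) (hasa : IsARSeq u v) :
    ∃ h : T ⟶ X, ¬ FTP (h ≫ f) := by
  classical
  -- the pullback of p along f
  set φ : (X × P) →ₗ[A] M :=
    (f.hom ∘ₗ LinearMap.fst A X P) - (p.hom ∘ₗ LinearMap.snd A X P) with hφ
  have φ_apply : ∀ y : X × P, φ y = f y.1 - p y.2 := fun y => rfl
  set Q : ModuleCat.{u} A := ModuleCat.of A (LinearMap.ker φ) with hQ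
  set q : Q ⟶ X := ModuleCat.ofHom ((LinearMap.fst A X P) ∘ₗ (LinearMap.ker φ).subtype) with hq
  set π : Q ⟶ P := ModuleCat.ofHom ((LinearMap.snd A X P) ∘ₗ (LinearMap.ker φ).subtype) with hπ
  have hpi : ∀ k : K, p (i k) = 0 := fun k => hip.apply_apply_eq_zero k
  have jmem : ∀ k : K, ((LinearMap.inr A X P) ∘ₗ i.hom) k ∈ LinearMap.ker φ := by
    intro k
    simp [LinearMap.mem_ker, φ_apply, hpi k]
  set j : K ⟶ Q := ModuleCat.ofHom (LinearMap.codRestrict (LinearMap.ker φ)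
      ((LinearMap.inr A X P) ∘ₗ i.hom) jmem) with hj
  have qj : ∀ k : K, q (j k) = 0 := fun k => rfl
  have πj : ∀ k : K, π (j k) = i k := fun k => rfl
  have hqel : ∀ y : Q, f (q y) = p (π y) := by
    intro y
    have := y.2
    rw [LinearMap.mem_ker, φ_apply] at this
    have : f y.1.1 - p y.1.2 = 0 := this
    have := sub_eq_zero.mp this
    exact this
  have hqsurj : Function.Surjective q := by
    intro x
    obtain ⟨e, he⟩ := hpsurj (f x)
    exact ⟨⟨(x, e), by simp [LinearMap.mem_ker, φ_apply, he]⟩, rfl⟩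
  -- j is not a split mono
  have hjns : ∀ r : Q ⟶ K, j ≫ r ≠ 𝟙 K := by
    intro r hr
    apply hf
    have hrj : ∀ k : K, r (j k) = k := fun k => ConcreteCategory.congr_hom hr k
    set σ : (Q : Type u) →ₗ[A] P := π.hom - i.hom ∘ₗ r.hom
      with hσ
    have hσker : ∀ y : Q, q y = 0 → σ y = 0 := by
      intro y hy
      -- y.1.1 = 0, and p y.1.2 = 0, so y.1.2 = i k
      have hy1 : y.1.1 = 0 := hy
      have hp2 : p y.1.2 = 0 := by
        have := hqel y
        rw [show q y = y.1.1 from rfl, hy1, map_zero] at this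
        exact this.symm
      obtain ⟨k, hk⟩ := (hip y.1.2).mp hp2
      have hyj : y = j k := by
        apply Subtype.ext
        have : (j k).1 = (0, i k) := rfl
        rw [this]
        ext
        · exact hy1
        · exact hk.symm
      rw [hyj]
      show π (j k) - i (r (j k)) = 0
      rw [πj, hrj, sub_self]
    obtain ⟨t, ht⟩ := descend q.hom hqsurj σ hσker
    refine ⟨P, ModuleCat.ofHom t, p, hP, ?_⟩
    apply ModuleCat.hom_ext
    apply LinearMap.ext
    intro x
    obtain ⟨y, rfl⟩ := hqsurj x
    show f (q y) = p (t (q y))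
    rw [ht y]
    show f (q y) = p (π y - i (r y))
    rw [map_sub, hpi, sub_zero, hqel]
  -- factor j through u
  obtain ⟨w, hw⟩ := hasa.left_almost Q j hjns
  have hwu : ∀ k : K, w (u k) = j k := fun k => ConcreteCategory.congr_hom hw k
  -- descend q ∘ w along v
  have hkerv : ∀ z : Z, v z = 0 → q (w z) = 0 := by
    intro z hz
    obtain ⟨k, rfl⟩ := (hasa.exact z).mp hz
    rw [hwu, qj]
  obtain ⟨h, hh⟩ := descend v.hom hasa.epi
    (q.hom ∘ₗ w.hom) (by intro z hz; exact hkerv z hz)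
  refine ⟨ModuleCat.ofHom h, ?_⟩
  rintro ⟨P', a, b, hP', hfac⟩
  -- lift b through p
  have : Epi p := (ModuleCat.epi_iff_surjective p).mpr hpsurj
  obtain ⟨c, hc⟩ := Projective.factors (P := P') b p
  -- δ := π ∘ w - (a ≫ c) ∘ v  maps into ker p = range i
  set g : T ⟶ P := a ≫ c with hg
  set δ : (Z : Type u) →ₗ[A] P :=
    π.hom ∘ₗ w.hom - g.hom ∘ₗ v.hom with hδ
  have hδmem : ∀ z : Z, δ z ∈ LinearMap.range i.hom := by
    intro z
    have hz0 : p (δ z) = 0 := by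
      show p (π (w z) - g (v z)) = 0
      rw [map_sub, ← hqel (w z)]
      have h1 : q (w z) = h (v z) := (hh z).symm
      rw [h1]
      have h2 : p (g (v z)) = f (h (v z)) := by
        have h3 : f (h (v z)) = b (a (v z)) := ConcreteCategory.congr_hom hfac (v z)
        rw [h3]
        show p (c (a (v z))) = b (a (v z))
        exact ConcreteCategory.congr_hom hc (a (v z))
      rw [h2, sub_self]
    obtain ⟨k, hk⟩ := (hip (δ z)).mp hz0
    exact ⟨k, hk⟩
  set e := LinearEquiv.ofInjective i.hom hi with he
  set s : (Z : Type u) →ₗ[A] K :=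
    e.symm.toLinearMap ∘ₗ (LinearMap.codRestrict (LinearMap.range i.hom) δ hδmem)
    with hs
  have his : ∀ z : Z, i (s z) = δ z := by
    intro z
    have : e (s z) = ⟨δ z, hδmem z⟩ := e.apply_symm_apply _
    have := congrArg Subtype.val this
    exact this
  have : u ≫ ModuleCat.ofHom s = 𝟙 K := by
    apply ModuleCat.hom_ext
    apply LinearMap.ext
    intro k
    apply hi
    show i (s (u k)) = i k
    rw [his]
    show π (w (u k)) - g (v (u k)) = i k
    rw [hwu, πj]
    have : v (u k) = 0 := hasa.exact.apply_apply_eq_zero k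
    rw [this, map_zero, sub_zero]
  exact hasa.not_split (ModuleCat.ofHom s) this
end
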